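/- A linear map Λ from d×d complex matrices to d'×d' complex matrices is positive (maps positive semidefinite matrices to positive semidefinite matrices) if and only if the associated Choi matrix W = (I ⊗ Λ)(P_+) satisfies ⟨x ⊗ y, W (x ⊗ y)⟩ ≥ 0 for all vectors x ∈ C^d, y ∈ C^{d'}. -/

import Mathlib

open scoped BigOperators ComplexConjugate ComplexOrder

noncomputable section

/-- The Choi matrix `W = (I ⊗ Λ)(P₊)` of a linear map `Λ : M_d → M_{d'}`,
determined by `⟨k|Λ(|i⟩⟨j|)|l⟩ = d · ⟨i⊗k|W|j⊗l⟩`. -/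
def choi {d d' : ℕ} (Λ : Matrix (Fin d) (Fin d) ℂ →ₗ[ℂ] Matrix (Fin d') (Fin d') ℂ) :
    Matrix (Fin d × Fin d') (Fin d × Fin d') ℂ :=
  fun p q => (1 / d : ℂ) * (Λ (Matrix.single p.1 q.1 1)) p.2 q.2

open scoped Matrix

/-- Swapping two finite sums of complex numbers. -/
lemma sum_swapC {α β : Type*} [Fintype α] [Fintype β] (f : α → β → ℂ) :
    (∑ a, ∑ b, f a b) = ∑ b, ∑ a, f a b := Finset.sum_comm

lemma vecMulVec_eq_sum {d : ℕ} (x : Fin d → ℂ) :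
    Matrix.vecMulVec (star x) x
      = ∑ i, ∑ j, (starRingEnd ℂ (x i) * x j) • Matrix.single i j (1 : ℂ) := by
  ext a b
  simp [Matrix.vecMulVec_apply, Matrix.single, Matrix.sum_apply, Pi.star_apply,
    ite_and, Finset.sum_ite_eq, Finset.sum_ite_eq']

/-- The quadratic form of the Choi matrix on a product vector equals `1/d` times the
quadratic form of `Λ` applied to the rank-one matrix built from `x`. -/
lemma choi_quad {d d' : ℕ} (Λ : Matrix (Fin d) (Fin d) ℂ →ₗ[ℂ] Matrix (Fin d') (Fin d') ℂ)
    (x : Fin d → ℂ) (y : Fin d' → ℂ) :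
    dotProduct (star fun p : Fin d × Fin d' => x p.1 * y p.2)
        ((choi Λ).mulVec fun p => x p.1 * y p.2)
      = (1 / d : ℂ) *
        dotProduct (star y) ((Λ (Matrix.vecMulVec (star x) x)).mulVec y) := by
  rw [vecMulVec_eq_sum]
  simp only [map_sum, map_smul]
  simp only [dotProduct, Matrix.mulVec, choi, Fintype.sum_prod_type,
    Matrix.sum_apply, Matrix.smul_apply, smul_eq_mul, Pi.star_apply, star_mul',
    Finset.sum_mul, Finset.mul_sum]
  calc (∑ i : Fin d, ∑ k : Fin d', ∑ j : Fin d, ∑ l : Fin d',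
        star (x i) * star (y k) * (1 / (d:ℂ) * Λ (Matrix.single i j 1) k l * (x j * y l)))
      = ∑ k : Fin d', ∑ i : Fin d, ∑ j : Fin d, ∑ l : Fin d',
          star (x i) * star (y k) * (1 / (d:ℂ) * Λ (Matrix.single i j 1) k l * (x j * y l)) :=
        sum_swapC _
    _ = ∑ k : Fin d', ∑ i : Fin d, ∑ l : Fin d', ∑ j : Fin d,
          star (x i) * star (y k) * (1 / (d:ℂ) * Λ (Matrix.single i j 1) k l * (x j * y l)) := by
        refine Finset.sum_congr rfl fun k _ => Finset.sum_congr rfl fun i _ => ?_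
        exact sum_swapC _
    _ = ∑ k : Fin d', ∑ l : Fin d', ∑ i : Fin d, ∑ j : Fin d,
          star (x i) * star (y k) * (1 / (d:ℂ) * Λ (Matrix.single i j 1) k l * (x j * y l)) := by
        refine Finset.sum_congr rfl fun k _ => ?_
        exact sum_swapC _
    _ = ∑ k : Fin d', ∑ l : Fin d', ∑ j : Fin d, ∑ i : Fin d,
          1 / (d:ℂ) * (star (y k) * ((starRingEnd ℂ) (x j) * x i * Λ (Matrix.single j i 1) k l * y l)) := by
        refine Finset.sum_congr rfl fun k _ => Finset.sum_congr rfl fun l _ => ?_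
        refine Finset.sum_congr rfl fun j _ => Finset.sum_congr rfl fun i _ => ?_
        simp only [RCLike.star_def]
        ring

lemma quad_pair {n : ℕ} (N : Matrix (Fin n) (Fin n) ℂ) (i j : Fin n) (a b : ℂ) :
    dotProduct (star (Pi.single i a)) (N.mulVec (Pi.single j b))
      = starRingEnd ℂ a * N i j * b := by
  have hs : star (Pi.single i a) = (Pi.single i (starRingEnd ℂ a) : Fin n → ℂ) := by
    ext k
    rcases eq_or_ne k i with rfl | h
    · simp
    · simp [Pi.single_eq_of_ne h]
  rw [hs, Matrix.mulVec_single, single_dotProduct]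
  simp only [Pi.smul_apply, op_smul_eq_mul, Matrix.col_apply]
  ring

lemma quad_single {n : ℕ} (N : Matrix (Fin n) (Fin n) ℂ) (i : Fin n) (a : ℂ) :
    dotProduct (star (Pi.single i a)) (N.mulVec (Pi.single i a))
      = starRingEnd ℂ a * a * N i i := by
  rw [quad_pair]; ring

lemma quad_single₂ {n : ℕ} (N : Matrix (Fin n) (Fin n) ℂ) (i j : Fin n) (a b : ℂ) :
    dotProduct (star (Pi.single i a + Pi.single j b))
        (N.mulVec (Pi.single i a + Pi.single j b))
      = starRingEnd ℂ a * a * N i i + starRingEnd ℂ a * b * N i j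
        + starRingEnd ℂ b * a * N j i + starRingEnd ℂ b * b * N j j := by
  rw [star_add, Matrix.mulVec_add, add_dotProduct,
    dotProduct_add, dotProduct_add, quad_pair, quad_pair, quad_pair, quad_pair]
  ring

/-- A complex matrix with a nonnegative quadratic form is Hermitian. -/
lemma isHermitian_of_quad_nonneg {n : ℕ} (M : Matrix (Fin n) (Fin n) ℂ)
    (h : ∀ y : Fin n → ℂ, 0 ≤ dotProduct (star y) (M.mulVec y)) :
    M.IsHermitian := by
  have hreal : ∀ y : Fin n → ℂ, starRingEnd ℂ (dotProduct (star y) (M.mulVec y))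
      = dotProduct (star y) (M.mulVec y) := by
    intro y
    have := h y
    rw [Complex.le_def] at this
    exact Complex.conj_eq_iff_im.2 this.2.symm
  have hconj : ∀ y : Fin n → ℂ, dotProduct (star y) (Mᴴ.mulVec y)
      = starRingEnd ℂ (dotProduct (star y) (M.mulVec y)) := by
    intro y
    simp only [dotProduct, Matrix.mulVec, map_sum, map_mul, Pi.star_apply,
      RCLike.star_def, Complex.conj_conj, Matrix.conjTranspose_apply, Finset.mul_sum]
    rw [sum_swapC]
    refine Finset.sum_congr rfl fun k _ => Finset.sum_congr rfl fun l _ => ?_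
    ring
  set N := M - Mᴴ with hN
  have hzero : ∀ y : Fin n → ℂ, dotProduct (star y) (N.mulVec y) = 0 := by
    intro y
    simp only [hN, Matrix.sub_mulVec, dotProduct_sub, hconj, hreal, sub_self]
  have hNzero : N = 0 := by
    ext i j
    rcases eq_or_ne i j with rfl | hij
    · have := hzero (Pi.single i 1)
      rw [quad_single] at this
      simpa using this
    · have h1 := hzero (Pi.single i (1:ℂ) + Pi.single j 1)
      have h2 := hzero (Pi.single i (1:ℂ) + Pi.single j Complex.I)
      have hii := hzero (Pi.single i (1:ℂ))
      have hjj := hzero (Pi.single j (1:ℂ))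
      rw [quad_single] at hii hjj
      rw [quad_single₂ N i j] at h1 h2
      simp only [map_one, one_mul, mul_one, Complex.conj_I] at h1 h2 hii hjj
      have hsum : N i j + N j i = 0 := by linear_combination h1 - hii - hjj
      have hdiff : Complex.I * (N i j - N j i) = 0 := by linear_combination h2 - hii + Complex.I*Complex.I*hjj
      have hdiff' : N i j - N j i = 0 :=
        (mul_eq_zero.mp hdiff).resolve_left Complex.I_ne_zero
      have : N i j = 0 := by linear_combination (hsum + hdiff') / 2
      simpa using this
  have : Mᴴ = M := by
    have := sub_eq_zero.mp hNzero
    exact this.symm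
  exact this

lemma quad_matrix_sum {n d : ℕ} (M : Fin d → Matrix (Fin n) (Fin n) ℂ) (y : Fin n → ℂ) :
    dotProduct (star y) ((∑ k, M k).mulVec y)
      = ∑ k, dotProduct (star y) ((M k).mulVec y) := by
  simp only [dotProduct, Matrix.mulVec, Matrix.sum_apply, Finset.sum_mul,
    Finset.mul_sum]
  calc (∑ a, ∑ b, ∑ k, star y a * (M k a b * y b))
      = ∑ a, ∑ k, ∑ b, star y a * (M k a b * y b) := by
        refine Finset.sum_congr rfl fun a _ => ?_
        exact sum_swapC _
    _ = ∑ k, ∑ a, ∑ b, star y a * (M k a b * y b) := sum_swapC _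

theorem positive_iff_choi_positive_on_products (d d' : ℕ) (hd : 0 < d) (hd' : 0 < d')
    (Λ : Matrix (Fin d) (Fin d) ℂ →ₗ[ℂ] Matrix (Fin d') (Fin d') ℂ) :
    (∀ A : Matrix (Fin d) (Fin d) ℂ, A.PosSemidef → (Λ A).PosSemidef) ↔
    (∀ (x : Fin d → ℂ) (y : Fin d' → ℂ),
      0 ≤ dotProduct (star fun p : Fin d × Fin d' => x p.1 * y p.2)
            ((choi Λ).mulVec fun p => x p.1 * y p.2)) := by
  have hdc : (0:ℂ) ≤ (1 / d : ℂ) := by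
    have : ((1 / d : ℝ) : ℂ) = (1 / d : ℂ) := by push_cast; ring
    rw [← this]
    exact Complex.zero_le_real.2 (by positivity)
  constructor
  · intro h x y
    rw [choi_quad]
    refine mul_nonneg hdc ?_
    have hA : (Matrix.vecMulVec (star x) x).PosSemidef := by
      have heq : Matrix.vecMulVec (star x) x
          = (Matrix.replicateRow Unit x)ᴴ * Matrix.replicateRow Unit x := by
        ext a b
        simp [Matrix.mul_apply, Matrix.vecMulVec_apply]
      rw [heq]
      exact Matrix.posSemidef_conjTranspose_mul_self _
    exact (h _ hA).dotProduct_mulVec_nonneg y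
  · intro h A hA
    obtain ⟨B, rfl⟩ : ∃ B : Matrix (Fin d) (Fin d) ℂ, A = Bᴴ * B := by
      open scoped MatrixOrder in
      exact CStarAlgebra.nonneg_iff_eq_star_mul_self.mp hA.nonneg
    have hsum : Bᴴ * B
        = ∑ k : Fin d, Matrix.vecMulVec (star (fun i => B k i)) (fun i => B k i) := by
      ext a b
      simp [Matrix.mul_apply, Matrix.vecMulVec_apply, Matrix.sum_apply,
        Matrix.conjTranspose_apply]
    have hquad : ∀ y : Fin d' → ℂ,
        0 ≤ dotProduct (star y) ((Λ (Bᴴ * B)).mulVec y) := by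
      intro y
      rw [hsum, map_sum, quad_matrix_sum]
      refine Finset.sum_nonneg fun k _ => ?_
      have h0 := h (fun i => B k i) y
      rw [choi_quad] at h0
      have hd0 : (0:ℂ) ≤ (d : ℂ) := by
        rw [show ((d:ℂ)) = ((d:ℝ):ℂ) from by push_cast; ring]
        exact Complex.zero_le_real.2 (by positivity)
      have hmul := mul_nonneg hd0 h0
      rw [← mul_assoc] at hmul
      have hdne : (d:ℂ) ≠ 0 := Nat.cast_ne_zero.2 hd.ne'
      rwa [mul_one_div, div_self hdne, one_mul] at hmul
    exact Matrix.PosSemidef.of_dotProduct_mulVec_nonneg (isHermitian_of_quad_nonneg _ hquad) hquad
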